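/- arXiv:2404.03433 — 5 statements merged into one kernel-verified Lean document; each statement's English description precedes it below -/
import Mathlib

section
/- Let K₁, K₂ be nonzero Hilbert spaces and A ∈ B(K₂, K₁). Define T on K₁ ⊕ K₂ by the block matrix T = [[I, A], [A*, I + 2A*A]]. Then ‖T‖ = 1 + ‖A‖² + ‖A‖·√(1 + ‖A‖²). -/
open ContinuousLinearMap

local notation "⟪" x ", " y "⟫" => @inner ℂ _ _ x y

lemma aux_norm_le {H : Type*} [NormedAddCommGroup H] [InnerProductSpace ℂ H]
    [CompleteSpace H] (T : H →L[ℂ] H) (hsa : ∀ x y : H, ⟪T x, y⟫ = ⟪x, T y⟫)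
    {C : ℝ} (hC : 0 ≤ C)
    (h : ∀ x : H, |(⟪T x, x⟫).re| ≤ C * ‖x‖ ^ 2) : ‖T‖ ≤ C := by
  have key : ∀ x y : H, (⟪T x, y⟫).re ≤ C / 2 * (‖x‖ ^ 2 + ‖y‖ ^ 2) := by
    intro x y
    have hre : (⟪T y, x⟫).re = (⟪T x, y⟫).re := by
      rw [hsa y x, ← inner_conj_symm y (T x), Complex.conj_re]
    have e1 : (⟪T (x + y), x + y⟫).re - (⟪T (x - y), x - y⟫).re
        = 4 * (⟪T x, y⟫).re := by
      simp only [map_add, map_sub, inner_add_left, inner_add_right, inner_sub_left,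
        inner_sub_right, Complex.add_re, Complex.sub_re]
      linarith [hre]
    have h1 := h (x + y)
    have h2 := h (x - y)
    have hpar : ‖x + y‖ ^ 2 + ‖x - y‖ ^ 2 = 2 * (‖x‖ ^ 2 + ‖y‖ ^ 2) := by
      have := parallelogram_law_with_norm ℂ x y
      nlinarith [this]
    rw [abs_le] at h1 h2
    nlinarith [h1.2, h2.1, e1]
  refine opNorm_le_bound T hC fun x => ?_
  by_cases hx : T x = 0
  · simp [hx]; positivity
  have hTx : 0 < ‖T x‖ := norm_pos_iff.mpr hx
  set y : H := ((‖x‖ / ‖T x‖ : ℝ) : ℂ) • T x with hy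
  have hny : ‖y‖ = ‖x‖ := by
    rw [hy, norm_smul]
    simp only [Complex.norm_real, Real.norm_eq_abs, abs_div, abs_norm]
    field_simp
  have hrey : (⟪T x, y⟫).re = ‖x‖ * ‖T x‖ := by
    rw [hy, inner_smul_right]
    have : ⟪T x, T x⟫ = ((‖T x‖ : ℝ) : ℂ) ^ 2 := inner_self_eq_norm_sq_to_K (T x)
    rw [this]
    have : ((‖x‖ / ‖T x‖ : ℝ) : ℂ) * ((‖T x‖ : ℝ) : ℂ) ^ 2
        = (((‖x‖ / ‖T x‖) * ‖T x‖ ^ 2 : ℝ) : ℂ) := by push_cast; ring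
    rw [this, Complex.ofReal_re]
    field_simp
  have := key x y
  rw [hrey, hny] at this
  by_cases hx0 : x = 0
  · simp [hx0] at hx
  have hnx : 0 < ‖x‖ := norm_pos_iff.mpr hx0
  nlinarith

set_option maxHeartbeats 1600000 in
open ContinuousLinearMap in
/-- Let `A : K₂ → K₁` be bounded and let `T` be the block operator
`[[I, A], [A*, I + 2A*A]]` on the Hilbert space direct sum `K₁ ⊕ K₂`.
Then `‖T‖ = 1 + ‖A‖² + ‖A‖√(1 + ‖A‖²)`. -/
theorem norm_block_operator_eq
    {K₁ K₂ : Type*} [NormedAddCommGroup K₁] [InnerProductSpace ℂ K₁] [CompleteSpace K₁]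
    [NormedAddCommGroup K₂] [InnerProductSpace ℂ K₂] [CompleteSpace K₂]
    [Nontrivial K₁] [Nontrivial K₂]
    (A : K₂ →L[ℂ] K₁)
    (T : WithLp 2 (K₁ × K₂) →L[ℂ] WithLp 2 (K₁ × K₂))
    (hT : ∀ (x : K₁) (y : K₂),
      T ((WithLp.equiv 2 (K₁ × K₂)).symm (x, y)) =
        (WithLp.equiv 2 (K₁ × K₂)).symm
          (x + A y, adjoint A x + (y + 2 • adjoint A (A y)))) :
    ‖T‖ = 1 + ‖A‖ ^ 2 + ‖A‖ * Real.sqrt (1 + ‖A‖ ^ 2) := by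
  set e := (WithLp.equiv 2 (K₁ × K₂)).symm with he
  have hsurj : ∀ p : WithLp 2 (K₁ × K₂), p = e (p.fst, p.snd) := fun p => rfl
  have hinner : ∀ (x x' : K₁) (y y' : K₂),
      ⟪e (x, y), e (x', y')⟫ = ⟪x, x'⟫ + ⟪y, y'⟫ := by
    intro x x' y y'
    rw [WithLp.prod_inner_apply]
    norm_num [he]
  have hN : ∀ (x : K₁) (y : K₂), ‖e (x, y)‖ ^ 2 = ‖x‖ ^ 2 + ‖y‖ ^ 2 := by
    intro x y
    rw [WithLp.prod_norm_sq_eq_of_L2]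
    norm_num [he]
  have hsa : ∀ p q : WithLp 2 (K₁ × K₂), ⟪T p, q⟫ = ⟪p, T q⟫ := by
    intro p q
    rw [hsurj p, hsurj q, hT, hT, hinner, hinner]
    simp only [two_smul, inner_add_left, inner_add_right, adjoint_inner_left,
      adjoint_inner_right]
    ring
  have hQ : ∀ (x : K₁) (y : K₂),
      (⟪T (e (x, y)), e (x, y)⟫).re
        = ‖x‖ ^ 2 + ‖y‖ ^ 2 + 2 * (⟪A y, x⟫).re + 2 * ‖A y‖ ^ 2 := by
    intro x y
    rw [hT, hinner]
    simp only [two_smul, inner_add_left, adjoint_inner_left]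
    rw [← inner_conj_symm x (A y)]
    have h1 : (⟪x, x⟫).re = ‖x‖ ^ 2 := by simpa using inner_self_eq_norm_sq (𝕜 := ℂ) x
    have h2 : (⟪y, y⟫).re = ‖y‖ ^ 2 := by simpa using inner_self_eq_norm_sq (𝕜 := ℂ) y
    have h3 : (⟪A y, A y⟫).re = ‖A y‖ ^ 2 := by
      simpa using inner_self_eq_norm_sq (𝕜 := ℂ) (A y)
    simp only [Complex.add_re, Complex.conj_re, h1, h2, h3]
    ring
  set a := ‖A‖ with ha_def
  have ha : 0 ≤ a := norm_nonneg A
  set r := Real.sqrt (1 + a ^ 2) with hr_def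
  have hr2 : r ^ 2 = 1 + a ^ 2 := Real.sq_sqrt (by positivity)
  have hr0 : 0 < r := Real.sqrt_pos.mpr (by positivity)
  have har : a < r := by nlinarith
  have hC : (0:ℝ) ≤ 1 + a ^ 2 + a * r := by positivity
  -- upper bound
  have upper : ‖T‖ ≤ 1 + a ^ 2 + a * r := by
    apply aux_norm_le T hsa hC
    intro p
    rw [hsurj p, hQ, hN]
    set u := ‖p.fst‖ with hu
    set v := ‖p.snd‖ with hv
    set w := ‖A p.snd‖ with hw
    have hw0 : 0 ≤ w := norm_nonneg _
    have hu0 : 0 ≤ u := norm_nonneg _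
    have hv0 : 0 ≤ v := norm_nonneg _
    have hwa : w ≤ a * v := A.le_opNorm p.snd
    have hip : |(⟪A p.snd, p.fst⟫).re| ≤ w * u := by
      calc |(⟪A p.snd, p.fst⟫).re| ≤ ‖(⟪A p.snd, p.fst⟫ : ℂ)‖ := Complex.abs_re_le_norm _
        _ ≤ w * u := norm_inner_le_norm _ _
    obtain ⟨hip1, hip2⟩ := abs_le.mp hip
    rw [abs_le]
    constructor
    · nlinarith [sq_nonneg (u - w), mul_nonneg hC (by positivity : (0:ℝ) ≤ u ^ 2 + v ^ 2)]
    · have hexp : (a + r) * ((a + r) * u ^ 2 - 2 * (u * v) + (r - a) * v ^ 2)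
          = ((a + r) * u - v) ^ 2 + (r ^ 2 - a ^ 2 - 1) * v ^ 2 := by ring
      have hD1 : 0 ≤ (a + r) * ((a + r) * u ^ 2 - 2 * (u * v) + (r - a) * v ^ 2) := by
        rw [hexp, hr2]
        nlinarith [sq_nonneg ((a + r) * u - v)]
      have harpos : 0 < a + r := by linarith
      have hD2 : 0 ≤ (a + r) * u ^ 2 - 2 * (u * v) + (r - a) * v ^ 2 :=
        nonneg_of_mul_nonneg_right hD1 harpos
      nlinarith [mul_nonneg ha hD2, mul_nonneg hu0 (sub_nonneg.mpr hwa),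
        mul_nonneg (sub_nonneg.mpr hwa) (add_nonneg (mul_nonneg ha hv0) hw0)]
  -- Rayleigh lower bound
  have hRay : ∀ p : WithLp 2 (K₁ × K₂), (⟪T p, p⟫).re ≤ ‖T‖ * ‖p‖ ^ 2 := by
    intro p
    calc (⟪T p, p⟫).re ≤ ‖(⟪T p, p⟫ : ℂ)‖ := Complex.re_le_norm _
      _ ≤ ‖T p‖ * ‖p‖ := norm_inner_le_norm _ _
      _ ≤ (‖T‖ * ‖p‖) * ‖p‖ := by gcongr; exact T.le_opNorm p
      _ = ‖T‖ * ‖p‖ ^ 2 := by ring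
  have hone : (1:ℝ) ≤ ‖T‖ := by
    obtain ⟨y₀, hy₀⟩ := exists_ne (0 : K₂)
    have hny₀ : 0 < ‖y₀‖ := norm_pos_iff.mpr hy₀
    have h := hRay (e (0, y₀))
    rw [hQ, hN] at h
    simp only [inner_zero_right, Complex.zero_re, norm_zero] at h
    nlinarith [mul_pos hny₀ hny₀, sq_nonneg ‖A y₀‖]
  by_cases haz : a = 0
  · rw [haz] at upper ⊢
    norm_num at upper ⊢
    exact le_antisymm upper hone
  have hapos : 0 < a := lt_of_le_of_ne ha (Ne.symm haz)
  refine le_antisymm upper (le_of_forall_pos_le_add fun δ hδ => ?_)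
  have hfc : ContinuousAt (fun t : ℝ => 1 + t ^ 2 + t * Real.sqrt (1 + t ^ 2)) a := by
    fun_prop
  rw [Metric.continuousAt_iff] at hfc
  obtain ⟨ε, hε, hfε⟩ := hfc δ hδ
  set ε' := min ε a with hε'
  have hε'0 : 0 < ε' := lt_min hε hapos
  have hε'a : ε' ≤ a := min_le_right _ _
  have hε'ε : ε' ≤ ε := min_le_left _ _
  have hnn : (0:ℝ) ≤ a - ε' / 2 := by linarith
  have hlt : a - ε' / 2 < ‖A‖ := by rw [← ha_def]; linarith
  obtain ⟨y₀, hy₀⟩ := A.exists_mul_lt_of_lt_opNorm hnn hlt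
  have hy₀0 : y₀ ≠ 0 := by
    rintro rfl
    rw [norm_zero, mul_zero, map_zero, norm_zero] at hy₀
    exact lt_irrefl 0 hy₀
  have hny₀ : 0 < ‖y₀‖ := norm_pos_iff.mpr hy₀0
  set y : K₂ := ((‖y₀‖⁻¹ : ℝ) : ℂ) • y₀ with hy
  have hy1 : ‖y‖ = 1 := by
    rw [hy, norm_smul, Complex.norm_real, Real.norm_eq_abs, abs_inv, abs_norm]
    field_simp
  set t := ‖A y‖ with ht_def
  have htval : t = ‖y₀‖⁻¹ * ‖A y₀‖ := by
    rw [ht_def, hy, map_smul, norm_smul, Complex.norm_real, Real.norm_eq_abs, abs_inv, abs_norm]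
  have htlb : a - ε' / 2 < t := by
    rw [htval, ← div_eq_inv_mul, lt_div_iff₀ hny₀]
    exact hy₀
  have htub : t ≤ a := by
    have := A.le_opNorm y
    rwa [hy1, mul_one, ← ha_def, ← ht_def] at this
  have ht0 : 0 < t := by linarith
  set ρ := Real.sqrt (1 + t ^ 2) with hρ_def
  have hρ2 : ρ ^ 2 = 1 + t ^ 2 := Real.sq_sqrt (by positivity)
  have hρ0 : 0 < ρ := Real.sqrt_pos.mpr (by positivity)
  have htρ : t < ρ := by nlinarith
  set s := Real.sqrt ((ρ + t) / (2 * ρ)) with hs_def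
  set c := Real.sqrt ((ρ - t) / (2 * ρ)) with hc_def
  have hs0 : 0 ≤ s := Real.sqrt_nonneg _
  have hc0 : 0 ≤ c := Real.sqrt_nonneg _
  have hs2 : s ^ 2 = (ρ + t) / (2 * ρ) := Real.sq_sqrt (by positivity)
  have hc2 : c ^ 2 = (ρ - t) / (2 * ρ) :=
    Real.sq_sqrt (div_nonneg (by linarith) (by linarith))
  have hmul : (ρ + t) * (ρ - t) = 1 := by linear_combination hρ2
  have hsc : s * c = 1 / (2 * ρ) := by
    rw [hs_def, hc_def,
      ← Real.sqrt_mul (show (0:ℝ) ≤ (ρ + t) / (2 * ρ) by positivity) ((ρ - t) / (2 * ρ))]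
    have h1 : (ρ + t) / (2 * ρ) * ((ρ - t) / (2 * ρ)) = (1 / (2 * ρ)) ^ 2 := by
      rw [div_mul_div_comm, hmul]
      ring
    rw [h1, Real.sqrt_sq (by positivity)]
  set x : K₁ := ((c / t : ℝ) : ℂ) • A y with hx
  have hnx : ‖x‖ = c := by
    rw [hx, norm_smul, Complex.norm_real, Real.norm_eq_abs, abs_div, abs_of_nonneg hc0,
      abs_of_pos ht0, ← ht_def]
    field_simp
  have hnsy : ‖((s : ℝ) : ℂ) • y‖ = s := by
    rw [norm_smul, Complex.norm_real, Real.norm_eq_abs, abs_of_nonneg hs0, hy1, mul_one]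
  have hAy : (⟪A y, A y⟫).re = t ^ 2 := by
    simpa [← ht_def] using inner_self_eq_norm_sq (𝕜 := ℂ) (A y)
  have hip : (⟪A (((s : ℝ) : ℂ) • y), x⟫).re = s * c * t := by
    rw [map_smul, hx, inner_smul_left, inner_smul_right, Complex.conj_ofReal]
    have : ((s : ℝ) : ℂ) * (((c / t : ℝ) : ℂ) * ⟪A y, A y⟫)
        = ((s * (c / t) : ℝ) : ℂ) * ⟪A y, A y⟫ := by push_cast; ring
    rw [this, Complex.re_ofReal_mul, hAy]
    field_simp
  have hAsy : ‖A (((s : ℝ) : ℂ) • y)‖ = s * t := by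
    rw [map_smul, norm_smul, Complex.norm_real, Real.norm_eq_abs, abs_of_nonneg hs0, ← ht_def]
  have h := hRay (e (x, ((s : ℝ) : ℂ) • y))
  rw [hQ, hN, hnx, hnsy, hip, hAsy] at h
  have hcs1 : c ^ 2 + s ^ 2 = 1 := by
    rw [hc2, hs2]
    field_simp
    ring
  have hval : c ^ 2 + s ^ 2 + 2 * (s * c * t) + 2 * (s * t) ^ 2 = 1 + t ^ 2 + t * ρ := by
    have h2ρ : (2 * ρ) ≠ 0 := by positivity
    rw [mul_pow, hc2, hs2, hsc]
    rw [show (ρ - t) / (2 * ρ) + (ρ + t) / (2 * ρ) + 2 * (1 / (2 * ρ) * t)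
        + 2 * ((ρ + t) / (2 * ρ) * t ^ 2)
        = (2 * ρ + 2 * t + 2 * ρ * t ^ 2 + 2 * t ^ 3) / (2 * ρ) by ring]
    rw [div_eq_iff h2ρ]
    linear_combination (-2 * t) * hρ2
  rw [hcs1, mul_one] at h
  have hT' : 1 + t ^ 2 + t * ρ ≤ ‖T‖ := by linarith [hval, hcs1, h]
  have hdist : dist t a < ε := by
    rw [Real.dist_eq, abs_of_nonpos (by linarith)]
    linarith
  have := hfε hdist
  rw [Real.dist_eq] at this
  have habs := abs_lt.mp this
  rw [← hρ_def] at habs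
  rw [← hr_def] at habs
  -- habs : |f t - f a| < δ componentwise
  have := habs.1
  linarith [hT']
end

section
/- Let K be a Hilbert space and D ∈ B(K) with D ≥ I. Define ℓ(D) = D^{1/2}(D-I)^{1/2} and Q̃ = [[D, -ℓ(D)], [ℓ(D), I - D]] on K ⊕ K. Then ‖Q̃‖ = 2‖D‖ − 1. -/
set_option synthInstance.maxHeartbeats 1000000
set_option maxHeartbeats 1000000

open scoped InnerProductSpace

/-- For a self-adjoint `D ≥ I` on a Hilbert space `K`, the block operator
`Q̃ = [[D, -ℓ(D)], [ℓ(D), I - D]]` on `K ⊕ K`, where `ℓ(D) = D^{1/2}(D-I)^{1/2}`,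
has norm `‖Q̃‖ = 2‖D‖ - 1`. -/
theorem norm_block_idempotent_eq
    {K : Type*} [NormedAddCommGroup K] [InnerProductSpace ℂ K] [CompleteSpace K]
    [Nontrivial K]
    (D : K →L[ℂ] K) (hD : (1 : K →L[ℂ] K) ≤ D)
    (Q : WithLp 2 (K × K) →L[ℂ] WithLp 2 (K × K))
    (hQ : ∀ (x y : K),
      Q ((WithLp.equiv 2 (K × K)).symm (x, y)) =
        (WithLp.equiv 2 (K × K)).symm
          (D x - (CFC.sqrt D * CFC.sqrt (D - 1)) y,
            (CFC.sqrt D * CFC.sqrt (D - 1)) x + ((1 - D) y))) :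
    ‖Q‖ = 2 * ‖D‖ - 1 := by
  have hD0 : (0 : K →L[ℂ] K) ≤ D := zero_le_one.trans hD
  have hD1 : (0 : K →L[ℂ] K) ≤ D - 1 := sub_nonneg.mpr hD
  have hDsa : IsSelfAdjoint D := .of_nonneg hD0
  set S := CFC.sqrt D with hSdef
  set T := CFC.sqrt (D - 1) with hTdef
  set A : K →L[ℂ] K := D + D - 1 with hAdef
  have hA1 : (1 : K →L[ℂ] K) ≤ A := by
    rw [hAdef, le_sub_iff_add_le]
    exact add_le_add hD hD
  have hA0 : (0 : K →L[ℂ] K) ≤ A := zero_le_one.trans hA1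
  set B := CFC.sqrt A with hBdef
  have hS0 : (0 : K →L[ℂ] K) ≤ S := CFC.sqrt_nonneg _
  have hT0 : (0 : K →L[ℂ] K) ≤ T := CFC.sqrt_nonneg _
  have hB0 : (0 : K →L[ℂ] K) ≤ B := CFC.sqrt_nonneg _
  have hSsa : IsSelfAdjoint S := .of_nonneg hS0
  have hTsa : IsSelfAdjoint T := .of_nonneg hT0
  have hBsa : IsSelfAdjoint B := .of_nonneg hB0
  have hSS : S * S = D := CFC.sqrt_mul_sqrt_self D hD0
  have hTT : T * T = D - 1 := CFC.sqrt_mul_sqrt_self _ hD1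
  have hBB : B * B = A := CFC.sqrt_mul_sqrt_self _ hA0
  have hsum : S * S + T * T = A := by rw [hSS, hTT, hAdef]; abel
  -- `S` and `T` commute, being continuous functions of `D`
  have hScfc : S = cfc Real.sqrt D := by
    rw [hSdef, CFC.sqrt_eq_cfc, cfc_nnreal_eq_real _ _ hD0]
    exact cfc_congr fun x _ => by rw [Real.sqrt]
  have hD1cfc : D - 1 = cfc (fun x : ℝ => x - 1) D := by
    rw [cfc_sub _ _ D, cfc_id' ℝ D, cfc_const 1 D, map_one]
  have hTcfc : T = cfc (fun x : ℝ => Real.sqrt (x - 1)) D := by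
    have h1 : T = cfc Real.sqrt (D - 1) := by
      rw [hTdef, CFC.sqrt_eq_cfc, cfc_nnreal_eq_real _ _ hD1]
      exact cfc_congr fun x _ => by rw [Real.sqrt]
    rw [h1, hD1cfc, ← cfc_comp' Real.sqrt (fun x : ℝ => x - 1) D
      (Real.continuous_sqrt.continuousOn) (by fun_prop)]
  have hST : Commute S T := by
    rw [hScfc, hTcfc]; exact cfc_commute_cfc _ _ D
  have hBA : Commute B A := by
    rw [← hBB]; exact (Commute.refl B).mul_right (Commute.refl B)
  -- pointwise norm computations
  have normsq : ∀ R : K →L[ℂ] K, IsSelfAdjoint R → ∀ c : K,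
      ‖R c‖ ^ 2 = RCLike.re (⟪c, (R * R) c⟫_ℂ) := by
    intro R hR c
    rw [ContinuousLinearMap.mul_apply]
    nth_rw 2 [← (ContinuousLinearMap.isSelfAdjoint_iff'.mp hR)]
    rw [ContinuousLinearMap.adjoint_inner_right, inner_self_eq_norm_sq]
  have hkey : ∀ c : K, ‖S c‖ ^ 2 + ‖T c‖ ^ 2 = ‖B c‖ ^ 2 := by
    intro c
    rw [normsq S hSsa c, normsq T hTsa c, normsq B hBsa c, ← map_add, ← inner_add_right,
      ← ContinuousLinearMap.add_apply, hsum, hBB]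
  have hWnorm : ∀ u v : K, ‖(WithLp.equiv 2 (K × K)).symm (u, v)‖ ^ 2 = ‖u‖ ^ 2 + ‖v‖ ^ 2 := by
    intro u v
    rw [WithLp.prod_norm_sq_eq_of_L2]
    rfl
  have sqrt_eq : ∀ x y : ℝ, 0 ≤ x → 0 ≤ y → x ^ 2 = y ^ 2 → x = y := by
    intro x y hx hy h
    have := congrArg Real.sqrt h
    rwa [Real.sqrt_sq hx, Real.sqrt_sq hy] at this
  have hQnorm : ∀ u v : K,
      ‖Q ((WithLp.equiv 2 (K × K)).symm (u, v))‖ = ‖B (S u - T v)‖ := by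
    intro u v
    have e1 : D u - (S * T) v = S (S u - T v) := by
      rw [← hSS]
      simp [ContinuousLinearMap.mul_apply, map_sub]
    have e2 : (S * T) u + (1 - D) v = T (S u - T v) := by
      rw [hST.eq, map_sub, ← ContinuousLinearMap.mul_apply T T, hTT]
      simp [ContinuousLinearMap.mul_apply, ContinuousLinearMap.sub_apply]
      abel
    rw [hQ u v, e1, e2]
    refine sqrt_eq _ _ (norm_nonneg _) (norm_nonneg _) ?_
    rw [hWnorm, hkey]
  -- norm estimates
  have hDnorm1 : 1 ≤ ‖D‖ := by
    have := CStarAlgebra.norm_le_norm_of_nonneg_of_le zero_le_one hD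
    rwa [norm_one] at this
  have halgD : D ≤ algebraMap ℝ (K →L[ℂ] K) ‖D‖ := hDsa.le_algebraMap_norm_self
  have hnormalg : ∀ r : ℝ, 0 ≤ r → ‖algebraMap ℝ (K →L[ℂ] K) r‖ = r := by
    intro r hr
    rw [Algebra.algebraMap_eq_smul_one, norm_smul, norm_one, Real.norm_eq_abs, abs_of_nonneg hr,
      mul_one]
  have hAnorm_le : ‖A‖ ≤ 2 * ‖D‖ - 1 := by
    have hAle : A ≤ algebraMap ℝ (K →L[ℂ] K) (2 * ‖D‖ - 1) := by
      have e : algebraMap ℝ (K →L[ℂ] K) (2 * ‖D‖ - 1)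
          = algebraMap ℝ _ ‖D‖ + algebraMap ℝ _ ‖D‖ - 1 := by
        rw [two_mul, map_sub, map_add, map_one]
      rw [e, hAdef]
      exact sub_le_sub_right (add_le_add halgD halgD) 1
    have := CStarAlgebra.norm_le_norm_of_nonneg_of_le hA0 hAle
    rwa [hnormalg _ (by linarith)] at this
  have hD1norm : ‖D - 1‖ ≤ ‖D‖ - 1 := by
    have hle : D - 1 ≤ algebraMap ℝ (K →L[ℂ] K) (‖D‖ - 1) := by
      rw [map_sub, map_one]
      exact sub_le_sub_right halgD 1
    have := CStarAlgebra.norm_le_norm_of_nonneg_of_le hD1 hle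
    rwa [hnormalg _ (by linarith)] at this
  have hSnorm : ‖S‖ * ‖S‖ = ‖D‖ := by
    calc ‖S‖ * ‖S‖ = ‖star S * S‖ := (CStarRing.norm_star_mul_self).symm
      _ = ‖S * S‖ := by rw [hSsa.star_eq]
      _ = ‖D‖ := by rw [hSS]
  have hTnorm : ‖T‖ * ‖T‖ = ‖D - 1‖ := by
    calc ‖T‖ * ‖T‖ = ‖star T * T‖ := (CStarRing.norm_star_mul_self).symm
      _ = ‖T * T‖ := by rw [hTsa.star_eq]
      _ = ‖D - 1‖ := by rw [hTT]
  have hconj : ∀ R : K →L[ℂ] K, IsSelfAdjoint R →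
      ‖B * R‖ ^ 2 ≤ (2 * ‖D‖ - 1) * (‖R‖ * ‖R‖) := by
    intro R hR
    have h1 : ‖B * R‖ ^ 2 = ‖star (B * R) * (B * R)‖ := by
      rw [CStarRing.norm_star_mul_self, sq]
    rw [h1, star_mul, hR.star_eq, hBsa.star_eq]
    have e : R * B * (B * R) = R * (A * R) := by
      rw [← hBB]; noncomm_ring
    rw [e]
    calc ‖R * (A * R)‖ ≤ ‖R‖ * ‖A * R‖ := norm_mul_le _ _
      _ ≤ ‖R‖ * (‖A‖ * ‖R‖) :=
          mul_le_mul_of_nonneg_left (norm_mul_le _ _) (norm_nonneg _)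
      _ = ‖A‖ * (‖R‖ * ‖R‖) := by ring
      _ ≤ (2 * ‖D‖ - 1) * (‖R‖ * ‖R‖) :=
          mul_le_mul_of_nonneg_right hAnorm_le (mul_nonneg (norm_nonneg _) (norm_nonneg _))
  have hBS2 : ‖B * S‖ ^ 2 ≤ (2 * ‖D‖ - 1) * ‖D‖ := by
    have := hconj S hSsa; rwa [hSnorm] at this
  have hBT2 : ‖B * T‖ ^ 2 ≤ (2 * ‖D‖ - 1) * (‖D‖ - 1) := by
    have h := hconj T hTsa
    rw [hTnorm] at h
    refine h.trans ?_
    have : (0:ℝ) ≤ 2 * ‖D‖ - 1 := by linarith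
    exact mul_le_mul_of_nonneg_left hD1norm this
  -- upper bound
  have hQle : ‖Q‖ ≤ 2 * ‖D‖ - 1 := by
    refine Q.opNorm_le_bound (by linarith) fun x => ?_
    have hx : x = (WithLp.equiv 2 (K × K)).symm
        ((WithLp.equiv 2 (K × K) x).1, (WithLp.equiv 2 (K × K) x).2) := rfl
    rw [hx, hQnorm]
    set u := (WithLp.equiv 2 (K × K) x).1
    set v := (WithLp.equiv 2 (K × K) x).2
    have hBv : B (S u - T v) = (B * S) u - (B * T) v := by
      simp [ContinuousLinearMap.mul_apply, map_sub]
    rw [hBv]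
    have h1 : ‖(B * S) u - (B * T) v‖ ≤ ‖B * S‖ * ‖u‖ + ‖B * T‖ * ‖v‖ :=
      (norm_sub_le _ _).trans
        (add_le_add (ContinuousLinearMap.le_opNorm _ _) (ContinuousLinearMap.le_opNorm _ _))
    have hx2 : ‖(WithLp.equiv 2 (K × K)).symm (u, v)‖ ^ 2 = ‖u‖ ^ 2 + ‖v‖ ^ 2 := hWnorm u v
    set X := ‖(WithLp.equiv 2 (K × K)).symm (u, v)‖
    have hX0 : 0 ≤ X := norm_nonneg _
    have hsle : ‖B * S‖ * ‖u‖ + ‖B * T‖ * ‖v‖ ≤ (2 * ‖D‖ - 1) * X := by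
      have hsq : (‖B * S‖ * ‖u‖ + ‖B * T‖ * ‖v‖) ^ 2 ≤ ((2 * ‖D‖ - 1) * X) ^ 2 := by
        nlinarith [sq_nonneg (‖B * S‖ * ‖v‖ - ‖B * T‖ * ‖u‖), sq_nonneg ‖u‖, sq_nonneg ‖v‖,
          norm_nonneg (B * S), norm_nonneg (B * T), norm_nonneg u, norm_nonneg v,
          hBS2, hBT2, hx2, hDnorm1, hX0]
      have hs0 : 0 ≤ ‖B * S‖ * ‖u‖ + ‖B * T‖ * ‖v‖ := by positivity
      have haX : 0 ≤ (2 * ‖D‖ - 1) * X := by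
        apply mul_nonneg (by linarith) hX0
      nlinarith [hsq, hs0, haX]
    exact h1.trans hsle
  -- lower bound
  have hAunit : IsUnit A := CStarAlgebra.isUnit_of_le 1 hA1 isStrictlyPositive_one
  obtain ⟨uA, huA⟩ := hAunit
  have hBuA : Commute B (↑uA : K →L[ℂ] K) := by rw [huA]; exact hBA
  have hBinv : Commute B (↑uA⁻¹ : K →L[ℂ] K) := hBuA.units_inv_right
  have hBC : B * ((↑uA⁻¹ : K →L[ℂ] K) * B) = 1 := by
    rw [← mul_assoc, hBinv.eq, mul_assoc, hBB, ← huA]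
    exact uA.inv_mul
  have hlow : ∀ v : K, ‖A v‖ ≤ ‖Q‖ * ‖v‖ := by
    intro v
    set w : K := ((↑uA⁻¹ : K →L[ℂ] K) * B) v with hwdef
    have hBw : B w = v := by
      rw [hwdef, ← ContinuousLinearMap.mul_apply, hBC, ContinuousLinearMap.one_apply]
    have hQx := hQnorm (S w) (-(T w))
    have e : S (S w) - T (-(T w)) = A w := by
      rw [← hsum]
      simp [ContinuousLinearMap.mul_apply, ContinuousLinearMap.add_apply]
    rw [e] at hQx
    have e2 : B (A w) = A v := by
      rw [← ContinuousLinearMap.mul_apply, hBA.eq, ContinuousLinearMap.mul_apply, hBw]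
    rw [e2] at hQx
    have hxv : ‖(WithLp.equiv 2 (K × K)).symm (S w, -(T w))‖ = ‖v‖ := by
      refine sqrt_eq _ _ (norm_nonneg _) (norm_nonneg _) ?_
      rw [hWnorm, norm_neg, hkey w, hBw]
    calc ‖A v‖ = ‖Q ((WithLp.equiv 2 (K × K)).symm (S w, -(T w)))‖ := hQx.symm
      _ ≤ ‖Q‖ * ‖(WithLp.equiv 2 (K × K)).symm (S w, -(T w))‖ := Q.le_opNorm _
      _ = ‖Q‖ * ‖v‖ := by rw [hxv]
  have hQge : 2 * ‖D‖ - 1 ≤ ‖Q‖ := by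
    have hAle' : ‖A‖ ≤ ‖Q‖ := A.opNorm_le_bound (norm_nonneg Q) hlow
    have h2 : 2 * ‖D‖ ≤ ‖A‖ + 1 := by
      have e : ‖D + D‖ = 2 * ‖D‖ := by
        rw [← two_smul ℝ D, norm_smul, Real.norm_ofNat]
      have : ‖D + D‖ ≤ ‖A‖ + ‖(1 : K →L[ℂ] K)‖ := by
        calc ‖D + D‖ = ‖A + 1‖ := by rw [hAdef, sub_add_cancel]
          _ ≤ ‖A‖ + ‖(1 : K →L[ℂ] K)‖ := norm_add_le _ _
      rw [e, norm_one] at this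
      linarith
    linarith
  linarith
end

section
/- Let K be a Hilbert space and let B ∈ B(K) be positive and invertible with B ≥ I. Set D = (I + B)/2. Then the block operator W on K ⊕ K given by W = [[B^{-1/2}D^{1/2}, B^{-1/2}(D-I)^{1/2}], [B^{-1/2}(D-I)^{1/2}, -B^{-1/2}D^{1/2}]] satisfies W = W* and W² = I, i.e. W is a unitary symmetry. -/
set_option synthInstance.maxHeartbeats 1000000
set_option maxHeartbeats 1000000

/-- Let `B` be positive invertible with `B ≥ I` on a Hilbert space `K`, and set
`D = (I + B)/2`. Then the block operator
`W = [[B^{-1/2}D^{1/2}, B^{-1/2}(D-I)^{1/2}], [B^{-1/2}(D-I)^{1/2}, -B^{-1/2}D^{1/2}]]`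
on `K ⊕ K` is a unitary symmetry: `W = W*` and `W² = I`. -/
theorem block_unitary_symmetry
    {K : Type*} [NormedAddCommGroup K] [InnerProductSpace ℂ K] [CompleteSpace K]
    (B : K →L[ℂ] K) [Invertible B] (hBpos : (0 : K →L[ℂ] K) ≤ B)
    (hB : (1 : K →L[ℂ] K) ≤ B)
    (W : WithLp 2 (K × K) →L[ℂ] WithLp 2 (K × K))
    (hW : ∀ (x y : K),
      W ((WithLp.equiv 2 (K × K)).symm (x, y)) =
        (WithLp.equiv 2 (K × K)).symm
          ((CFC.sqrt (⅟B) * CFC.sqrt ((2 : ℝ)⁻¹ • (1 + B))) x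
              + (CFC.sqrt (⅟B) * CFC.sqrt ((2 : ℝ)⁻¹ • (1 + B) - 1)) y,
            (CFC.sqrt (⅟B) * CFC.sqrt ((2 : ℝ)⁻¹ • (1 + B) - 1)) x
              - (CFC.sqrt (⅟B) * CFC.sqrt ((2 : ℝ)⁻¹ • (1 + B))) y)) :
    IsSelfAdjoint W ∧ W * W = 1 := by
  have hBsa : IsSelfAdjoint B := .of_nonneg hBpos
  have hspec : ∀ x ∈ spectrum ℝ B, 1 ≤ x := (CFC.one_le_iff (R := ℝ) B hBsa).mp hB
  set f : ℝ → ℝ := fun x => Real.sqrt (max x 1)⁻¹ with hf_def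
  set g : ℝ → ℝ := fun x => Real.sqrt (2⁻¹ * (1 + x)) with hg_def
  set h : ℝ → ℝ := fun x => Real.sqrt (2⁻¹ * (x - 1)) with hh_def
  have hfc : Continuous f :=
    Real.continuous_sqrt.comp ((continuous_id.max continuous_const).inv₀
      (fun x => by positivity))
  have hgc : Continuous g := Real.continuous_sqrt.comp (by continuity)
  have hhc : Continuous h := Real.continuous_sqrt.comp (by continuity)
  -- square root of the inverse
  have hs : CFC.sqrt (⅟B) = cfc f B := by
    refine CFC.sqrt_unique ?_ (cfc_nonneg fun x _ => Real.sqrt_nonneg _)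
    symm
    refine invOf_eq_right_inv ?_
    calc B * (cfc f B * cfc f B)
        = cfc (fun x : ℝ => x * (f x * f x)) B := by
          rw [cfc_mul (fun x : ℝ => x) (fun x => f x * f x) B
              (continuousOn_id) ((hfc.mul hfc).continuousOn),
            cfc_mul f f B hfc.continuousOn hfc.continuousOn, cfc_id' ℝ B]
      _ = cfc (fun _ : ℝ => (1 : ℝ)) B := by
          refine cfc_congr fun x hx => ?_
          have h1 := hspec x hx
          have : f x * f x = x⁻¹ := by
            rw [hf_def]
            simp only
            rw [Real.mul_self_sqrt (by positivity), max_eq_left h1]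
          rw [this, mul_inv_cancel₀ (by linarith)]
      _ = 1 := cfc_const_one ℝ B
  have hd : CFC.sqrt ((2 : ℝ)⁻¹ • (1 + B)) = cfc g B := by
    refine CFC.sqrt_unique ?_ (cfc_nonneg fun x _ => Real.sqrt_nonneg _)
    calc cfc g B * cfc g B
        = cfc (fun x : ℝ => g x * g x) B := by
          rw [cfc_mul g g B hgc.continuousOn hgc.continuousOn]
      _ = cfc (fun x : ℝ => 2⁻¹ * (1 + x)) B := by
          refine cfc_congr fun x hx => ?_
          have h1 := hspec x hx
          rw [hg_def]
          simp only
          rw [Real.mul_self_sqrt (by linarith)]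
      _ = (2 : ℝ)⁻¹ • (1 + B) := by
          rw [cfc_const_mul (2 : ℝ)⁻¹ (fun x : ℝ => 1 + x) B (by fun_prop),
            cfc_const_add (1 : ℝ) (fun x : ℝ => x) B continuousOn_id, cfc_id' ℝ B, map_one]
  have he : CFC.sqrt ((2 : ℝ)⁻¹ • (1 + B) - 1) = cfc h B := by
    refine CFC.sqrt_unique ?_ (cfc_nonneg fun x _ => Real.sqrt_nonneg _)
    calc cfc h B * cfc h B
        = cfc (fun x : ℝ => h x * h x) B := by
          rw [cfc_mul h h B hhc.continuousOn hhc.continuousOn]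
      _ = cfc (fun x : ℝ => 2⁻¹ * (x - 1)) B := by
          refine cfc_congr fun x hx => ?_
          have h1 := hspec x hx
          rw [hh_def]
          simp only
          rw [Real.mul_self_sqrt (by linarith)]
      _ = (2 : ℝ)⁻¹ • (1 + B) - 1 := by
          rw [cfc_const_mul (2 : ℝ)⁻¹ (fun x : ℝ => x - 1) B (by fun_prop),
            cfc_sub (fun x : ℝ => x) (fun _ : ℝ => 1) B continuousOn_id continuousOn_const,
            cfc_id' ℝ B, cfc_const_one ℝ B]
          module
  set P := CFC.sqrt (⅟B) * CFC.sqrt ((2 : ℝ)⁻¹ • (1 + B)) with hPdef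
  set Q := CFC.sqrt (⅟B) * CFC.sqrt ((2 : ℝ)⁻¹ • (1 + B) - 1) with hQdef
  have hP : P = cfc (fun x : ℝ => f x * g x) B := by
    rw [hPdef, hs, hd, cfc_mul f g B hfc.continuousOn hgc.continuousOn]
  have hQ : Q = cfc (fun x : ℝ => f x * h x) B := by
    rw [hQdef, hs, he, cfc_mul f h B hfc.continuousOn hhc.continuousOn]
  have hPsa : IsSelfAdjoint P := hP ▸ cfc_predicate _ B
  have hQsa : IsSelfAdjoint Q := hQ ▸ cfc_predicate _ B
  have hQP : P * Q = Q * P := by rw [hP, hQ]; exact cfc_commute_cfc _ _ B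
  have hsum : P * P + Q * Q = 1 := by
    rw [hP, hQ,
      ← cfc_mul (fun x : ℝ => f x * g x) (fun x : ℝ => f x * g x) B ((hfc.mul hgc).continuousOn) ((hfc.mul hgc).continuousOn),
      ← cfc_mul (fun x : ℝ => f x * h x) (fun x : ℝ => f x * h x) B ((hfc.mul hhc).continuousOn) ((hfc.mul hhc).continuousOn),
      ← cfc_add (a := B) (fun x : ℝ => f x * g x * (f x * g x)) (fun x : ℝ => f x * h x * (f x * h x)) (((hfc.mul hgc).mul (hfc.mul hgc)).continuousOn)
        (((hfc.mul hhc).mul (hfc.mul hhc)).continuousOn)]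
    calc cfc (fun x : ℝ => f x * g x * (f x * g x) + f x * h x * (f x * h x)) B
        = cfc (fun _ : ℝ => (1 : ℝ)) B := by
          refine cfc_congr fun x hx => ?_
          have h1 := hspec x hx
          have e1 : f x * f x = x⁻¹ := by
            rw [hf_def]; simp only
            rw [Real.mul_self_sqrt (by positivity), max_eq_left h1]
          have e2 : g x * g x = 2⁻¹ * (1 + x) := by
            rw [hg_def]; simp only; rw [Real.mul_self_sqrt (by linarith)]
          have e3 : h x * h x = 2⁻¹ * (x - 1) := by
            rw [hh_def]; simp only; rw [Real.mul_self_sqrt (by linarith)]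
          have : f x * g x * (f x * g x) + f x * h x * (f x * h x)
              = (f x * f x) * ((g x * g x) + (h x * h x)) := by ring
          rw [this, e1, e2, e3]
          have : 2⁻¹ * (1 + x) + 2⁻¹ * (x - 1) = x := by ring
          rw [this, inv_mul_cancel₀ (by linarith)]
      _ = 1 := cfc_const_one ℝ B
  constructor
  · rw [ContinuousLinearMap.isSelfAdjoint_iff_isSymmetric]
    intro u v
    have hu : (WithLp.equiv 2 (K × K)).symm
        (((WithLp.equiv 2 (K × K)) u).1, ((WithLp.equiv 2 (K × K)) u).2) = u := by rw [Prod.mk.eta, Equiv.symm_apply_apply]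
    have hv : (WithLp.equiv 2 (K × K)).symm
        (((WithLp.equiv 2 (K × K)) v).1, ((WithLp.equiv 2 (K × K)) v).2) = v := by rw [Prod.mk.eta, Equiv.symm_apply_apply]
    have h1 := hW (((WithLp.equiv 2 (K × K)) u).1) (((WithLp.equiv 2 (K × K)) u).2)
    have h2 := hW (((WithLp.equiv 2 (K × K)) v).1) (((WithLp.equiv 2 (K × K)) v).2)
    rw [hu] at h1
    rw [hv] at h2
    show inner ℂ (W u) v = inner ℂ u (W v)
    rw [h1, h2]
    set x := ((WithLp.equiv 2 (K × K)) u).1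
    set y := ((WithLp.equiv 2 (K × K)) u).2
    set a := ((WithLp.equiv 2 (K × K)) v).1
    set b := ((WithLp.equiv 2 (K × K)) v).2
    rw [← hu, ← hv]
    simp only [WithLp.prod_inner_apply, WithLp.equiv_symm_apply, WithLp.ofLp_toLp]
    have hP' : ∀ w z : K, (inner ℂ (P w) z : ℂ) = inner ℂ w (P z) := fun w z => hPsa.isSymmetric w z
    have hQ' : ∀ w z : K, (inner ℂ (Q w) z : ℂ) = inner ℂ w (Q z) := fun w z => hQsa.isSymmetric w z
    simp only [inner_add_left, inner_sub_left, inner_add_right, inner_sub_right, hP', hQ']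
    ring
  · ext z
    have hz : (WithLp.equiv 2 (K × K)).symm
        (((WithLp.equiv 2 (K × K)) z).1, ((WithLp.equiv 2 (K × K)) z).2) = z := by rw [Prod.mk.eta, Equiv.symm_apply_apply]
    have h1 := hW (((WithLp.equiv 2 (K × K)) z).1) (((WithLp.equiv 2 (K × K)) z).2)
    rw [hz] at h1
    set x := ((WithLp.equiv 2 (K × K)) z).1
    set y := ((WithLp.equiv 2 (K × K)) z).2
    show W (W z) = z
    rw [h1, hW, ← hz]
    refine congrArg _ ?_
    have c1 : P (P x + Q y) + Q (Q x - P y) = x := by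
      have hx1 : (P * P) x + (Q * Q) x = x := by
        rw [← ContinuousLinearMap.add_apply, hsum, ContinuousLinearMap.one_apply]
      have hy1 : (P * Q) y = (Q * P) y := by rw [hQP]
      simp only [ContinuousLinearMap.mul_apply] at hx1 hy1
      rw [map_add, map_sub, hy1,
        show P (P x) + Q (P y) + (Q (Q x) - Q (P y)) = P (P x) + Q (Q x) by abel, hx1]
    have c2 : Q (P x + Q y) - P (Q x - P y) = y := by
      have hy1 : (P * P) y + (Q * Q) y = y := by
        rw [← ContinuousLinearMap.add_apply, hsum, ContinuousLinearMap.one_apply]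
      have hx1 : (Q * P) x = (P * Q) x := by rw [hQP]
      simp only [ContinuousLinearMap.mul_apply] at hy1 hx1
      rw [map_add, map_sub, hx1,
        show P (Q x) + Q (Q y) - (P (Q x) - P (P y)) = P (P y) + Q (Q y) by abel, hy1]
    exact Prod.ext c1 c2
end

section
/- Let D ∈ B(K) satisfy I ≤ D and d := ‖D‖ > 1, and let a < d/(2d−1). Define D_a = (D − aI)/‖D − aI‖. Then ‖D − aI‖ = d − a, D_a is positive definite, and D_a − ℓ(D)/ℓ(d) = A(dI − D) for some positive definite A ∈ B(K); in particular D_a ≥ ℓ(D)/ℓ(d). -/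
set_option synthInstance.maxHeartbeats 1000000
set_option maxHeartbeats 1000000

namespace DaAux

noncomputable def gfun (d a x : ℝ) : ℝ :=
  (((d - a) ^ 2 - (d ^ 2 - d)) * x + a ^ 2 * (d - 1)) /
    ((d - a) * Real.sqrt (d * (d - 1)) *
      (Real.sqrt (d * (d - 1)) * (x - a) + (d - a) * (Real.sqrt x * Real.sqrt (x - 1))))

variable {d a x : ℝ}

lemma ha1 (hd : 1 < d) (ha : a < d / (2 * d - 1)) : a < 1 := by
  have h2 : 0 < 2 * d - 1 := by linarith
  have : d / (2 * d - 1) < 1 := by rw [div_lt_one h2]; linarith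
  linarith

lemma ha_lin (hd : 1 < d) (ha : a < d / (2 * d - 1)) : a * (2 * d - 1) < d := by
  have h2 : 0 < 2 * d - 1 := by linarith
  exact (lt_div_iff₀ h2).mp ha

lemma Q_pos (hd : 1 < d) (ha : a < d / (2 * d - 1)) (hx1 : 1 ≤ x) (hxd : x ≤ d) :
    0 < ((d - a) ^ 2 - (d ^ 2 - d)) * x + a ^ 2 * (d - 1) := by
  have h1 := ha1 hd ha
  have h2 := ha_lin hd ha
  have hQ1 : (0:ℝ) < d * (1 - a) ^ 2 := by nlinarith
  have hQd : (0:ℝ) < (d - a * (2 * d - 1)) * (d - a) := by nlinarith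
  nlinarith [mul_nonneg (sub_nonneg.mpr hxd) hQ1.le, mul_nonneg (sub_nonneg.mpr hx1) hQd.le]

lemma L_pos (hd : 1 < d) : 0 < Real.sqrt (d * (d - 1)) :=
  Real.sqrt_pos.mpr (by nlinarith)

lemma L_sq (hd : 1 < d) : Real.sqrt (d * (d - 1)) ^ 2 = d ^ 2 - d := by
  rw [Real.sq_sqrt (by nlinarith)]; ring

lemma l_nonneg : 0 ≤ Real.sqrt x * Real.sqrt (x - 1) :=
  mul_nonneg (Real.sqrt_nonneg _) (Real.sqrt_nonneg _)

lemma l_sq (hx1 : 1 ≤ x) : (Real.sqrt x * Real.sqrt (x - 1)) ^ 2 = x ^ 2 - x := by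
  rw [mul_pow, Real.sq_sqrt (by linarith), Real.sq_sqrt (by linarith)]; ring

lemma S_pos (hd : 1 < d) (ha : a < d / (2 * d - 1)) (hx1 : 1 ≤ x) :
    0 < Real.sqrt (d * (d - 1)) * (x - a) + (d - a) *
      (Real.sqrt x * Real.sqrt (x - 1)) := by
  have h1 := ha1 hd ha
  have := L_pos hd
  have : 0 < Real.sqrt (d * (d - 1)) * (x - a) := by
    apply mul_pos (L_pos hd); linarith
  have : 0 ≤ (d - a) * (Real.sqrt x * Real.sqrt (x - 1)) :=
    mul_nonneg (by linarith) l_nonneg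
  linarith

lemma gfun_pos (hd : 1 < d) (ha : a < d / (2 * d - 1)) (hx1 : 1 ≤ x) (hxd : x ≤ d) :
    0 < gfun d a x := by
  have h1 := ha1 hd ha
  exact div_pos (Q_pos hd ha hx1 hxd)
    (mul_pos (mul_pos (by linarith) (L_pos hd)) (S_pos hd ha hx1))

lemma key_eq (hd : 1 < d) (ha : a < d / (2 * d - 1)) (hx1 : 1 ≤ x) (hxd : x ≤ d) :
    (d - a)⁻¹ * (x - a) -
      (Real.sqrt (d * (d - 1)))⁻¹ * (Real.sqrt x * Real.sqrt (x - 1))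
      = gfun d a x * (d - x) := by
  have h1 := ha1 hd ha
  set L := Real.sqrt (d * (d - 1)) with hLdef
  set l := Real.sqrt x * Real.sqrt (x - 1) with hldef
  have hL : 0 < L := L_pos hd
  have hL2 : L ^ 2 = d ^ 2 - d := L_sq hd
  have hl2 : l ^ 2 = x ^ 2 - x := l_sq hx1
  have hda : (0:ℝ) < d - a := by linarith
  have hS : 0 < L * (x - a) + (d - a) * l := S_pos hd ha hx1
  have hNS : (L * (x - a) - (d - a) * l) * (L * (x - a) + (d - a) * l)
      = (d - x) * ((((d - a) ^ 2 - (d ^ 2 - d)) * x + a ^ 2 * (d - 1))) := by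
    linear_combination (x - a) ^ 2 * hL2 - (d - a) ^ 2 * hl2
  have expand : (d - a)⁻¹ * (x - a) - L⁻¹ * l
      = (L * (x - a) - (d - a) * l) / ((d - a) * L) := by
    field_simp
  rw [expand, gfun, div_mul_eq_mul_div,
    div_eq_div_iff (by positivity) (by positivity)]
  linear_combination ((d - a) * L) * hNS

end DaAux


/-- Let `D ≥ I` with `d = ‖D‖ > 1`, and let `a < d/(2d-1)`. Set
`D_a = (D - aI)/‖D - aI‖`. Then `‖D - aI‖ = d - a`, `D_a` is positive definite, and
`D_a - ℓ(D)/ℓ(d) = A(dI - D)` for some positive definite `A`; in particular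
`D_a ≥ ℓ(D)/ℓ(d)`. -/
theorem Da_sub_ell_factorization
    {K : Type*} [NormedAddCommGroup K] [InnerProductSpace ℂ K] [CompleteSpace K]
    (D : K →L[ℂ] K) (hD : (1 : K →L[ℂ] K) ≤ D) (hd : 1 < ‖D‖)
    (a : ℝ) (ha : a < ‖D‖ / (2 * ‖D‖ - 1)) :
    ‖D - a • 1‖ = ‖D‖ - a ∧
      (0 : K →L[ℂ] K) ≤ ‖D - a • 1‖⁻¹ • (D - a • 1) ∧
      IsUnit (‖D - a • 1‖⁻¹ • (D - a • 1)) ∧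
      (∃ A : K →L[ℂ] K, (0 : K →L[ℂ] K) ≤ A ∧ IsUnit A ∧
        ‖D - a • 1‖⁻¹ • (D - a • 1)
            - (Real.sqrt (‖D‖ * (‖D‖ - 1)))⁻¹ • (CFC.sqrt D * CFC.sqrt (D - 1)) =
          A * (‖D‖ • 1 - D)) ∧
      (Real.sqrt (‖D‖ * (‖D‖ - 1)))⁻¹ • (CFC.sqrt D * CFC.sqrt (D - 1)) ≤
        ‖D - a • 1‖⁻¹ • (D - a • 1) := by
  have hnt : Nontrivial (K →L[ℂ] K) := by
    refine ⟨D, 0, fun h => ?_⟩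
    rw [h] at hd
    simp at hd
    linarith
  set d : ℝ := ‖D‖ with hd_def
  have hD0 : (0 : K →L[ℂ] K) ≤ D := zero_le_one.trans hD
  have hsa : IsSelfAdjoint D := .of_nonneg hD0
  have ha1 : a < 1 := DaAux.ha1 hd ha
  have hspec1 : ∀ x ∈ spectrum ℝ D, (1:ℝ) ≤ x := by
    refine (algebraMap_le_iff_le_spectrum (R := ℝ) (a := D) (r := 1) hsa).mp ?_
    simpa using hD
  have hspecd : ∀ x ∈ spectrum ℝ D, x ≤ d := fun x hx =>
    (Real.le_norm_self x).trans (spectrum.norm_le_norm_of_mem hx)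
  have hdmem : d ∈ spectrum ℝ D := CStarAlgebra.norm_mem_spectrum_of_nonneg hD0
  -- basic expressions as cfc
  have hDa_eq : D - a • 1 = cfc (fun x : ℝ => x - a) D := by
    rw [cfc_sub (fun x : ℝ => x) (fun _ : ℝ => a) D (by fun_prop) (by fun_prop),
      cfc_id' ℝ D, cfc_const a D hsa, Algebra.algebraMap_eq_smul_one]
  -- continuity helpers
  have hcl : Continuous (fun x : ℝ => Real.sqrt x * Real.sqrt (x - 1)) := by fun_prop
  have hnorm : ‖D - a • 1‖ = d - a := by
    rw [hDa_eq]
    refine ((IsGreatest.norm_cfc (fun x : ℝ => x - a) D (by fun_prop) hsa).unique ?_)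
    constructor
    · exact ⟨d, hdmem, by
        show ‖d - a‖ = d - a
        rw [Real.norm_of_nonneg (by linarith)]⟩
    · rintro y ⟨x, hx, rfl⟩
      have h1 := hspec1 x hx
      have h2 := hspecd x hx
      show ‖x - a‖ ≤ d - a
      rw [Real.norm_of_nonneg (by linarith)]
      linarith
  have hDa' : ‖D - a • 1‖⁻¹ • (D - a • 1) = cfc (fun x : ℝ => (d - a)⁻¹ * (x - a)) D := by
    rw [hnorm, hDa_eq, cfc_const_mul (d - a)⁻¹ (fun x : ℝ => x - a) D (by fun_prop)]
  -- sqrt identities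
  have hsqrtD : CFC.sqrt D = cfc Real.sqrt D := by
    refine CFC.sqrt_unique ?_ (cfc_nonneg fun x _ => Real.sqrt_nonneg x)
    rw [← cfc_mul Real.sqrt Real.sqrt D (by fun_prop) (by fun_prop),
      cfc_congr (g := fun x : ℝ => x)
        (fun x hx => Real.mul_self_sqrt (by linarith [hspec1 x hx])),
      cfc_id' ℝ D]
  have hD1 : D - 1 = cfc (fun x : ℝ => x - 1) D := by
    rw [cfc_sub (fun x : ℝ => x) (fun _ : ℝ => (1:ℝ)) D (by fun_prop) (by fun_prop),
      cfc_id' ℝ D, cfc_const 1 D hsa, map_one]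
  have hsqrtD1 : CFC.sqrt (D - 1) = cfc (fun x : ℝ => Real.sqrt (x - 1)) D := by
    refine CFC.sqrt_unique ?_ (cfc_nonneg fun x _ => Real.sqrt_nonneg _)
    rw [← cfc_mul _ _ D (by fun_prop) (by fun_prop),
      cfc_congr (g := fun x : ℝ => x - 1)
        (fun x hx => Real.mul_self_sqrt (by linarith [hspec1 x hx])),
      ← hD1]
  have hprod : CFC.sqrt D * CFC.sqrt (D - 1)
      = cfc (fun x : ℝ => Real.sqrt x * Real.sqrt (x - 1)) D := by
    rw [hsqrtD, hsqrtD1, ← cfc_mul _ _ D (by fun_prop) (by fun_prop)]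
  have hE : (Real.sqrt (d * (d - 1)))⁻¹ • (CFC.sqrt D * CFC.sqrt (D - 1))
      = cfc (fun x : ℝ =>
          (Real.sqrt (d * (d - 1)))⁻¹ * (Real.sqrt x * Real.sqrt (x - 1))) D := by
    rw [hprod, cfc_const_mul _ _ D (Continuous.continuousOn hcl)]
  have hdI : ‖D‖ • 1 - D = cfc (fun x : ℝ => d - x) D := by
    rw [cfc_sub (fun _ : ℝ => d) (fun x : ℝ => x) D (by fun_prop) (by fun_prop),
      cfc_id' ℝ D, cfc_const d D hsa, Algebra.algebraMap_eq_smul_one]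
  -- the positive-definite factor A
  have hdenom : ∀ x ∈ spectrum ℝ D,
      (d - a) * Real.sqrt (d * (d - 1)) *
        (Real.sqrt (d * (d - 1)) * (x - a) + (d - a) *
          (Real.sqrt x * Real.sqrt (x - 1))) ≠ 0 := fun x hx =>
    (mul_pos (mul_pos (by linarith) (DaAux.L_pos hd))
      (DaAux.S_pos hd ha (hspec1 x hx))).ne'
  have hg_cont : ContinuousOn (DaAux.gfun d a) (spectrum ℝ D) := by
    apply ContinuousOn.div
    · fun_prop
    · fun_prop
    · exact hdenom
  refine ⟨hnorm, ?_, ?_, ⟨cfc (DaAux.gfun d a) D, ?_, ?_, ?_⟩, ?_⟩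
  · rw [hDa']
    refine cfc_nonneg fun x hx => ?_
    have h1 := hspec1 x hx
    exact mul_nonneg (inv_nonneg.mpr (by linarith)) (by linarith)
  · rw [hDa']
    rw [isUnit_cfc_iff _ D (by fun_prop) hsa]
    intro x hx
    have h1 := hspec1 x hx
    have h2 : (0:ℝ) < (d - a)⁻¹ := by
      rw [inv_pos]; linarith
    exact (mul_pos h2 (by linarith)).ne'
  · exact cfc_nonneg fun x hx => (DaAux.gfun_pos hd ha (hspec1 x hx) (hspecd x hx)).le
  · rw [isUnit_cfc_iff _ D hg_cont hsa]
    exact fun x hx => (DaAux.gfun_pos hd ha (hspec1 x hx) (hspecd x hx)).ne'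
  · rw [hDa', hE, hdI,
      ← cfc_sub (fun x : ℝ => (d - a)⁻¹ * (x - a))
        (fun x : ℝ => (Real.sqrt (d * (d - 1)))⁻¹ * (Real.sqrt x * Real.sqrt (x - 1))) D
        (by fun_prop) (by fun_prop),
      ← cfc_mul (DaAux.gfun d a) (fun x : ℝ => d - x) D hg_cont (by fun_prop)]
    exact cfc_congr fun x hx => DaAux.key_eq hd ha (hspec1 x hx) (hspecd x hx)
  · rw [hDa', hE]
    refine cfc_mono (fun x hx => ?_) (Continuous.continuousOn (by fun_prop)) (by fun_prop)
    have h1 := hspec1 x hx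
    have h2 := hspecd x hx
    have hkey := DaAux.key_eq hd ha h1 h2
    have hg := DaAux.gfun_pos hd ha h1 h2
    nlinarith [mul_nonneg hg.le (sub_nonneg.mpr h2)]
end

section
/- Let d > 1 and for each t ∈ [1, d] let f_t be the 2×2 matrix [[t+1, −√(t(t−1))], [0, 0]]. For real t₁, t₂ with 1 ≤ t₁ ≤ t₂ ≤ d, the support function of W(f_{t₁}) is pointwise dominated by that of W(f_{t₂}); consequently W(f_{t₁}) ⊆ W(f_{t₂}), and ∪_{t ∈ [1,d]} W(f_t) = W(f_d). -/
/-- The numerical range of a `2 × 2` complex matrix. -/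
def matrixNumericalRange (A : Matrix (Fin 2) (Fin 2) ℂ) : Set ℂ :=
  {z : ℂ | ∃ x : EuclideanSpace ℂ (Fin 2), ‖x‖ = 1 ∧
    z = inner ℂ (Matrix.toEuclideanLin A x) x}

/-- The support function of a subset `E ⊆ ℂ`: `h_E(α) = sup {Re (z e^{-iα}) : z ∈ E}`. -/
noncomputable def supportFn (E : Set ℂ) (α : ℝ) : ℝ :=
  sSup ((fun z : ℂ => (z * Complex.exp (-(α : ℂ) * Complex.I)).re) '' E)

/-- The matrix `f_t = [[t+1, −√(t(t−1))], [0, 0]]`. -/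
noncomputable def fMat (t : ℝ) : Matrix (Fin 2) (Fin 2) ℂ :=
  !![(t : ℂ) + 1, -(Real.sqrt (t * (t - 1)) : ℂ); 0, 0]

lemma conj_mul_self' (a : ℂ) : (starRingEnd ℂ a) * a = (Complex.normSq a : ℂ) := by
  rw [mul_comm, Complex.mul_conj]

set_option maxRecDepth 4000 in
/-- Concrete description of the numerical range of `fMat t`. -/
lemma mem_fMat_iff (t : ℝ) (z : ℂ) :
    z ∈ matrixNumericalRange (fMat t) ↔
      ∃ a b : ℂ, Complex.normSq a + Complex.normSq b = 1 ∧
        z = ((t:ℂ)+1) * Complex.normSq a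
          - (Real.sqrt (t*(t-1)) : ℂ) * (starRingEnd ℂ b) * a := by
  constructor
  · rintro ⟨x, hx, rfl⟩
    refine ⟨x 0, x 1, ?_, ?_⟩
    · have := congrArg (fun r => r^2) hx
      simp only [EuclideanSpace.norm_eq, Fin.sum_univ_two] at this
      rw [Real.sq_sqrt (by positivity)] at this
      simpa [Complex.normSq_eq_norm_sq] using this
    · have h : (inner ℂ (Matrix.toEuclideanLin (fMat t) x) x : ℂ)
          = ((t:ℂ)+1) * ((starRingEnd ℂ (x 0)) * (x 0))
            - (Real.sqrt (t*(t-1)) : ℂ) * (starRingEnd ℂ (x 1)) * (x 0) := by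
        simp [Matrix.toEuclideanLin_apply, PiLp.inner_apply, Fin.sum_univ_two, fMat,
          Matrix.mulVec, dotProduct]
        ring
      rw [h, conj_mul_self']
  · rintro ⟨a, b, hab, rfl⟩
    refine ⟨(WithLp.equiv 2 (Fin 2 → ℂ)).symm ![a, b], ?_, ?_⟩
    · rw [EuclideanSpace.norm_eq]
      simp only [Fin.sum_univ_two, WithLp.equiv_symm_apply, PiLp.toLp_apply]
      rw [show ‖(![a,b] : Fin 2 → ℂ) 0‖ = ‖a‖ by norm_num,
        show ‖(![a,b] : Fin 2 → ℂ) 1‖ = ‖b‖ by norm_num]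
      rw [show ‖a‖^2 + ‖b‖^2 = 1 by
        simpa [Complex.normSq_eq_norm_sq] using hab]
      exact Real.sqrt_one
    · have h : (inner ℂ (Matrix.toEuclideanLin (fMat t)
            ((WithLp.equiv 2 (Fin 2 → ℂ)).symm ![a, b]))
            ((WithLp.equiv 2 (Fin 2 → ℂ)).symm ![a, b]) : ℂ)
          = ((t:ℂ)+1) * ((starRingEnd ℂ a) * a)
            - (Real.sqrt (t*(t-1)) : ℂ) * (starRingEnd ℂ b) * a := by
        simp [Matrix.toEuclideanLin_apply, PiLp.inner_apply, Fin.sum_univ_two, fMat,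
          Matrix.mulVec, dotProduct, WithLp.equiv_symm_apply, PiLp.toLp_apply]
        ring
      rw [h, conj_mul_self']

/-- The elliptical-disk condition describing `W(f_t)` as a union of circles. -/
def ellCond (t : ℝ) (z : ℂ) : Prop :=
  ∃ x ∈ Set.Icc (0:ℝ) (t+1),
    (t+1)^2 * Complex.normSq (z - x) ≤ t*(t-1)*x*(t+1-x)

set_option maxHeartbeats 1000000 in
lemma mem_iff_ellCond (t : ℝ) (ht : 1 ≤ t) (z : ℂ) :
    z ∈ matrixNumericalRange (fMat t) ↔ ellCond t z := by
  rw [mem_fMat_iff]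
  constructor
  · rintro ⟨a, b, hab, rfl⟩
    set s := Real.sqrt (t*(t-1)) with hs
    have hs2 : s^2 = t*(t-1) := Real.sq_sqrt (by nlinarith)
    have ha0 : 0 ≤ Complex.normSq a := Complex.normSq_nonneg a
    have hb0 : 0 ≤ Complex.normSq b := Complex.normSq_nonneg b
    refine ⟨(t+1) * Complex.normSq a, ⟨by positivity, by nlinarith⟩, ?_⟩
    have key : (((t:ℂ)+1) * Complex.normSq a - (s:ℂ) * (starRingEnd ℂ b) * a)
        - ((((t+1) * Complex.normSq a : ℝ)):ℂ) = -((s:ℂ) * (starRingEnd ℂ b) * a) := by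
      push_cast; ring
    rw [key]
    have hn : Complex.normSq (-((s:ℂ) * (starRingEnd ℂ b) * a))
        = s^2 * Complex.normSq b * Complex.normSq a := by
      simp [Complex.normSq_mul, Complex.normSq_conj, Complex.normSq_ofReal, sq]
    rw [hn, hs2]
    have hb : Complex.normSq b = 1 - Complex.normSq a := by linarith
    rw [hb]; apply le_of_eq; ring
  · rintro ⟨x₀, ⟨hx00, hx01⟩, hx0⟩
    set s := Real.sqrt (t*(t-1)) with hs
    have ht1 : (0:ℝ) < t + 1 := by linarith
    have hs2 : s^2 = t*(t-1) := Real.sq_sqrt (by nlinarith)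
    have hs0 : 0 ≤ s := Real.sqrt_nonneg _
    set g : ℝ → ℝ := fun x => t*(t-1)*x*(t+1-x) - (t+1)^2 * ((z.re - x)^2 + z.im^2)
      with hg
    have hcont : ContinuousOn g (Set.Icc 0 x₀) := by fun_prop
    have hg0 : g 0 ≤ 0 := by
      simp only [hg]
      nlinarith [sq_nonneg z.re, sq_nonneg z.im]
    have hgx0 : 0 ≤ g x₀ := by
      have hnsq : Complex.normSq (z - x₀) = (z.re - x₀)^2 + z.im^2 := by
        simp [Complex.normSq_apply, Complex.sub_re, Complex.sub_im, sq]
      simp only [hg]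
      rw [hnsq] at hx0
      linarith
    obtain ⟨x₁, hx₁mem, hx₁⟩ := intermediate_value_Icc hx00 hcont ⟨hg0, hgx0⟩
    obtain ⟨hx₁0, hx₁x₀⟩ := hx₁mem
    have hx₁le : x₁ ≤ t + 1 := le_trans hx₁x₀ hx01
    have heq : (t+1)^2 * Complex.normSq (z - x₁) = t*(t-1)*x₁*(t+1-x₁) := by
      have hnsq : Complex.normSq (z - x₁) = (z.re - x₁)^2 + z.im^2 := by
        simp [Complex.normSq_apply, Complex.sub_re, Complex.sub_im, sq]
      simp only [hg] at hx₁
      rw [hnsq]; linarith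
    have hu0 : 0 ≤ x₁ / (t+1) := by positivity
    have hu1 : x₁ / (t+1) ≤ 1 := by
      rw [div_le_one ht1]; exact hx₁le
    set a : ℂ := (Real.sqrt (x₁/(t+1)) : ℂ) with ha
    have hna : Complex.normSq a = x₁/(t+1) := by
      rw [ha, Complex.normSq_ofReal, Real.mul_self_sqrt hu0]
    by_cases hcase : t*(t-1)*x₁ = 0
    · have hz : z = (x₁ : ℂ) := by
        have h1 : Complex.normSq (z - x₁) = 0 := by
          nlinarith [Complex.normSq_nonneg (z - x₁)]
        have := Complex.normSq_eq_zero.mp h1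
        linear_combination this
      refine ⟨a, (Real.sqrt (1 - x₁/(t+1)) : ℂ), ?_, ?_⟩
      · rw [hna, Complex.normSq_ofReal, Real.mul_self_sqrt (by linarith)]
        ring
      · have hsa : (s : ℂ) * a = 0 := by
          rcases mul_eq_zero.mp hcase with h1 | h1
          · have hse : s = 0 := by rw [hs, show t*(t-1) = 0 from h1, Real.sqrt_zero]
            rw [hse]; simp
          · have hae : a = 0 := by rw [ha, h1]; simp
            rw [hae]; simp
        rw [hz, hna]
        rw [show ((t:ℂ)+1) * ((x₁/(t+1) : ℝ) : ℂ) - (s:ℂ) * (starRingEnd ℂ _) * a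
            = ((t:ℂ)+1) * ((x₁/(t+1) : ℝ) : ℂ)
              - ((s:ℂ) * a) * (starRingEnd ℂ ((Real.sqrt (1 - x₁/(t+1)) : ℝ) : ℂ)) by ring,
          hsa]
        push_cast
        have htc : ((t:ℂ)+1) ≠ 0 := by
          simp only [ne_eq, ← Complex.ofReal_one, ← Complex.ofReal_add]
          exact_mod_cast ne_of_gt ht1
        field_simp
        simp
    · have htt0 : t*(t-1) ≠ 0 := fun h1 => hcase (by rw [h1]; ring)
      have htt : 0 < t*(t-1) := lt_of_le_of_ne (by nlinarith) (Ne.symm htt0)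
      have hx₁ne : x₁ ≠ 0 := fun h1 => hcase (by rw [h1]; ring)
      have hx₁pos : 0 < x₁ := lt_of_le_of_ne hx₁0 (Ne.symm hx₁ne)
      have hspos : 0 < s := Real.sqrt_pos.mpr htt
      have hapos : 0 < Real.sqrt (x₁/(t+1)) := Real.sqrt_pos.mpr (by positivity)
      have hane : a ≠ 0 := by
        rw [ha]; exact_mod_cast ne_of_gt hapos
      set b : ℂ := starRingEnd ℂ (((x₁:ℂ) - z)/((s:ℂ) * a)) with hb
      have hnb : Complex.normSq b = (t+1-x₁)/(t+1) := by
        rw [hb, Complex.normSq_conj, Complex.normSq_div, Complex.normSq_mul,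
          Complex.normSq_ofReal, hna]
        have h1 : Complex.normSq ((x₁:ℂ) - z) = Complex.normSq (z - x₁) := by
          rw [show ((x₁:ℂ) - z) = -(z - x₁) by ring, Complex.normSq_neg]
        rw [h1]
        have h2 : Complex.normSq (z - x₁) = t*(t-1)*x₁*(t+1-x₁)/(t+1)^2 := by
          field_simp at heq ⊢; linarith
        rw [h2, show s*s = t*(t-1) by nlinarith]
        have htm1 : t - 1 ≠ 0 := fun h => htt0 (by rw [h]; ring)
        have ht0 : t ≠ 0 := fun h => htt0 (by rw [h]; ring)
        field_simp
      refine ⟨a, b, ?_, ?_⟩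
      · rw [hna, hnb, ← add_div, show x₁ + (t+1-x₁) = t+1 by ring,
          div_self (ne_of_gt ht1)]
      · have hsane : (s:ℂ) * a ≠ 0 := by
          apply mul_ne_zero _ hane
          exact_mod_cast ne_of_gt hspos
        have htc : ((t:ℂ)+1) ≠ 0 := by
          simp only [ne_eq, ← Complex.ofReal_one, ← Complex.ofReal_add]
          exact_mod_cast ne_of_gt ht1
        have h3 : (s:ℂ) * (((x₁:ℂ)-z)/((s:ℂ)*a)) * a = (x₁:ℂ)-z := by
          rw [show (s:ℂ) * (((x₁:ℂ)-z)/((s:ℂ)*a)) * a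
              = (((x₁:ℂ)-z)/((s:ℂ)*a)) * ((s:ℂ)*a) by ring]
          exact div_mul_cancel₀ _ hsane
        have hx₁cast : ((t:ℂ)+1) * ((x₁/(t+1) : ℝ):ℂ) = (x₁:ℂ) := by
          rw [Complex.ofReal_div]
          push_cast
          rw [mul_div_cancel₀ _ htc]
        rw [hb, Complex.conj_conj, hna]
        linear_combination h3 - hx₁cast

/-- Monotonicity of the elliptical-disk condition in `t`. -/
lemma ellCond_mono {t₁ t₂ : ℝ} (h1 : 1 ≤ t₁) (h12 : t₁ ≤ t₂) {z : ℂ}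
    (h : ellCond t₁ z) : ellCond t₂ z := by
  obtain ⟨x, ⟨hx0, hx1⟩, hx⟩ := h
  refine ⟨x, ⟨hx0, by linarith⟩, ?_⟩
  have hN : 0 ≤ Complex.normSq (z - x) := Complex.normSq_nonneg _
  have hBA : (t₂+1)^2*(t₁*(t₁-1)) ≤ (t₁+1)^2*(t₂*(t₂-1)) := by
    nlinarith [mul_nonneg (sub_nonneg.2 h12)
      (show (0:ℝ) ≤ 3*t₁*t₂ + t₁ + t₂ - 1 by nlinarith)]
  have hx1' : 0 ≤ t₁ + 1 - x := by linarith
  have hB0 : 0 ≤ (t₁+1)^2*(t₂*(t₂-1)) :=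
    mul_nonneg (sq_nonneg _) (by nlinarith)
  have key : (t₂+1)^2*(t₁*(t₁-1))*x*(t₁+1-x)
      ≤ (t₁+1)^2 * (t₂*(t₂-1)*x*(t₂+1-x)) := by
    nlinarith [mul_nonneg (mul_nonneg (sub_nonneg.2 hBA) hx0) hx1',
      mul_nonneg (mul_nonneg hB0 hx0) (sub_nonneg.2 h12)]
  have step : (t₁+1)^2 * ((t₂+1)^2 * Complex.normSq (z - x))
      ≤ (t₁+1)^2 * (t₂*(t₂-1)*x*(t₂+1-x)) := by
    nlinarith [mul_le_mul_of_nonneg_left hx (sq_nonneg (t₂+1))]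
  have hpos : (0:ℝ) < (t₁+1)^2 := by positivity
  exact le_of_mul_le_mul_left step hpos

/-- Monotonicity of the numerical ranges. -/
lemma numRange_mono {t₁ t₂ : ℝ} (h1 : 1 ≤ t₁) (h12 : t₁ ≤ t₂) :
    matrixNumericalRange (fMat t₁) ⊆ matrixNumericalRange (fMat t₂) := by
  intro z hz
  rw [mem_iff_ellCond t₂ (le_trans h1 h12)]
  exact ellCond_mono h1 h12 ((mem_iff_ellCond t₁ h1 z).mp hz)

lemma numRange_nonempty (t : ℝ) : ((t:ℂ)+1) ∈ matrixNumericalRange (fMat t) := by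
  rw [mem_fMat_iff]
  exact ⟨1, 0, by simp, by simp⟩

lemma numRange_bdd (t : ℝ) (ht : 1 ≤ t) (α : ℝ) :
    BddAbove ((fun z : ℂ => (z * Complex.exp (-(α : ℂ) * Complex.I)).re) ''
      matrixNumericalRange (fMat t)) := by
  refine ⟨(t+1) + Real.sqrt (t*(t-1)), ?_⟩
  rintro _ ⟨z, hz, rfl⟩
  rw [mem_fMat_iff] at hz
  obtain ⟨a, b, hab, rfl⟩ := hz
  set s := Real.sqrt (t*(t-1)) with hs
  have hs0 : 0 ≤ s := Real.sqrt_nonneg _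
  set w := ((t:ℂ)+1) * Complex.normSq a - (s:ℂ) * (starRingEnd ℂ b) * a with hw
  have hexp : ‖Complex.exp (-(α : ℂ) * Complex.I)‖ = 1 := by
    rw [Complex.norm_exp]
    simp
  have h1 : (w * Complex.exp (-(α : ℂ) * Complex.I)).re
      ≤ ‖w‖ := by
    calc (w * Complex.exp (-(α : ℂ) * Complex.I)).re
        ≤ ‖w * Complex.exp (-(α : ℂ) * Complex.I)‖ := Complex.re_le_norm _
      _ = ‖w‖ := by rw [norm_mul, hexp, mul_one]
  refine le_trans h1 ?_
  have ha0 : 0 ≤ Complex.normSq a := Complex.normSq_nonneg a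
  have hb0 : 0 ≤ Complex.normSq b := Complex.normSq_nonneg b
  have haa : ‖a‖ ≤ 1 := by
    nlinarith [Complex.sq_norm a, norm_nonneg a]
  have hbb : ‖b‖ ≤ 1 := by
    nlinarith [Complex.sq_norm b, norm_nonneg b]
  have htri : ‖w‖ ≤ ‖((t:ℂ)+1) * Complex.normSq a‖
      + ‖(s:ℂ) * (starRingEnd ℂ b) * a‖ := by
    rw [hw]
    simpa [sub_eq_add_neg] using
      norm_add_le (((t:ℂ)+1) * Complex.normSq a)
        (-((s:ℂ) * (starRingEnd ℂ b) * a))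
  refine le_trans htri ?_
  have e1 : ‖((t:ℂ)+1) * Complex.normSq a‖ ≤ t+1 := by
    rw [norm_mul]
    rw [show ((t:ℂ)+1) = ((t+1 : ℝ) : ℂ) by push_cast; ring]
    rw [Complex.norm_real, Complex.norm_real, Real.norm_eq_abs, Real.norm_eq_abs]
    rw [abs_of_nonneg (by linarith), abs_of_nonneg ha0]
    nlinarith
  have e2 : ‖(s:ℂ) * (starRingEnd ℂ b) * a‖ ≤ s := by
    rw [norm_mul, norm_mul, Complex.norm_real, Real.norm_eq_abs, Complex.norm_conj,
      abs_of_nonneg hs0]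
    have hp : ‖b‖ * ‖a‖ ≤ 1 :=
      mul_le_one₀ hbb (norm_nonneg a) haa
    nlinarith [hs0, hp]
  linarith

/-- For `1 ≤ t₁ ≤ t₂ ≤ d`, the support function of `W(f_{t₁})` is dominated by that of
`W(f_{t₂})`, hence `W(f_{t₁}) ⊆ W(f_{t₂})`; consequently
`⋃_{t ∈ [1,d]} W(f_t) = W(f_d)`. -/
theorem numRange_fMat_monotone_and_union (d : ℝ) (hd : 1 < d) :
    (∀ t₁ t₂ : ℝ, 1 ≤ t₁ → t₁ ≤ t₂ → t₂ ≤ d →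
      (∀ α : ℝ, supportFn (matrixNumericalRange (fMat t₁)) α ≤
          supportFn (matrixNumericalRange (fMat t₂)) α) ∧
        matrixNumericalRange (fMat t₁) ⊆ matrixNumericalRange (fMat t₂)) ∧
      ⋃ t ∈ Set.Icc (1 : ℝ) d, matrixNumericalRange (fMat t) =
        matrixNumericalRange (fMat d) := by
  constructor
  · intro t₁ t₂ h1 h12 h2d
    have hsub := numRange_mono h1 h12
    refine ⟨fun α => ?_, hsub⟩
    have hne : (matrixNumericalRange (fMat t₁)).Nonempty :=
      Set.nonempty_of_mem (numRange_nonempty t₁)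
    exact csSup_le_csSup (numRange_bdd t₂ (le_trans h1 h12) α)
      (hne.image _) (Set.image_mono hsub)
  · apply subset_antisymm
    · exact Set.iUnion₂_subset fun t ht => numRange_mono ht.1 ht.2
    · exact Set.subset_biUnion_of_mem (u := fun t : ℝ => matrixNumericalRange (fMat t))
        (Set.mem_Icc.mpr ⟨le_of_lt hd, le_rfl⟩)
end
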